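/- arXiv:2011.13275 — 8 statements merged into one kernel-verified Lean document; each statement's English description precedes it below -/
import Mathlib

section
/- For two points p1=(x1,y1), p2=(x2,y2) in the plane with |x1-x2| = |y1-y2| and p1 ≠ p2, the Manhattan bisector {q : d_M(q,p1) = d_M(q,p2)} has positive (infinite) two-dimensional Lebesgue measure. -/
open MeasureTheory

/-- Manhattan distance on the plane. -/
noncomputable def dM (p q : ℝ × ℝ) : ℝ := |p.1 - q.1| + |p.2 - q.2|

lemma ici_ici_top (a b : ℝ) : volume (Set.Ici a ×ˢ Set.Ici b) = ⊤ := by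
  rw [MeasureTheory.Measure.volume_eq_prod, Measure.prod_prod]
  simp

lemma ici_iic_top (a b : ℝ) : volume (Set.Ici a ×ˢ Set.Iic b) = ⊤ := by
  rw [MeasureTheory.Measure.volume_eq_prod, Measure.prod_prod]
  simp

theorem degenerate_bisector_infinite_measure (p1 p2 : ℝ × ℝ)
    (hdeg : |p1.1 - p2.1| = |p1.2 - p2.2|) (hne : p1 ≠ p2) :
    volume {q : ℝ × ℝ | dM q p1 = dM q p2} = ⊤ := by
  rcases abs_eq_abs.mp hdeg with h | h
  · -- x1 - x2 = y1 - y2 : quarter plane q.1 ≥ max, q.2 ≤ min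
    refine top_le_iff.mp ?_
    calc (⊤ : ENNReal) = volume (Set.Ici (max p1.1 p2.1) ×ˢ Set.Iic (min p1.2 p2.2)) :=
          (ici_iic_top _ _).symm
      _ ≤ _ := by
          apply measure_mono
          rintro ⟨x, y⟩ ⟨hx, hy⟩
          simp only [Set.mem_Ici, le_max_iff, max_le_iff] at hx
          simp only [Set.mem_Iic, le_min_iff] at hy
          simp only [Set.mem_setOf_eq, dM]
          rw [abs_of_nonneg (by linarith [hx.1] : (0:ℝ) ≤ x - p1.1),
            abs_of_nonneg (by linarith [hx.2] : (0:ℝ) ≤ x - p2.1),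
            abs_of_nonpos (by linarith [hy.1] : y - p1.2 ≤ 0),
            abs_of_nonpos (by linarith [hy.2] : y - p2.2 ≤ 0)]
          linarith
  · -- x1 - x2 = -(y1 - y2) : quarter plane q.1 ≥ max, q.2 ≥ max
    refine top_le_iff.mp ?_
    calc (⊤ : ENNReal) = volume (Set.Ici (max p1.1 p2.1) ×ˢ Set.Ici (max p1.2 p2.2)) :=
          (ici_ici_top _ _).symm
      _ ≤ _ := by
          apply measure_mono
          rintro ⟨x, y⟩ ⟨hx, hy⟩
          simp only [Set.mem_Ici, max_le_iff] at hx hy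
          simp only [Set.mem_setOf_eq, dM]
          rw [abs_of_nonneg (by linarith [hx.1] : (0:ℝ) ≤ x - p1.1),
            abs_of_nonneg (by linarith [hx.2] : (0:ℝ) ≤ x - p2.1),
            abs_of_nonneg (by linarith [hy.1] : (0:ℝ) ≤ y - p1.2),
            abs_of_nonneg (by linarith [hy.2] : (0:ℝ) ≤ y - p2.2)]
          linarith
end

section
/- For two points p1=(x1,y1), p2=(x2,y2) with |x1-x2| > |y1-y2| > 0, the Manhattan bisector of p1 and p2 has two-dimensional Lebesgue measure zero. -/
open MeasureTheory

lemma subsingleton_aux (a b c : ℝ) (hc : |c| < |a - b|) :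
    {x : ℝ | |x - a| - |x - b| = c}.Subsingleton := by
  intro x hx x' hx'
  simp only [Set.mem_setOf_eq] at hx hx'
  rcases abs_cases (x - a) with ⟨e1, f1⟩ | ⟨e1, f1⟩ <;>
  rcases abs_cases (x - b) with ⟨e2, f2⟩ | ⟨e2, f2⟩ <;>
  rcases abs_cases (x' - a) with ⟨e3, f3⟩ | ⟨e3, f3⟩ <;>
  rcases abs_cases (x' - b) with ⟨e4, f4⟩ | ⟨e4, f4⟩ <;>
  rcases abs_cases (a - b) with ⟨e5, f5⟩ | ⟨e5, f5⟩ <;>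
  rcases abs_cases c with ⟨e6, f6⟩ | ⟨e6, f6⟩ <;>
  linarith

theorem nondegenerate_bisector_measure_zero (p1 p2 : ℝ × ℝ)
    (h1 : |p1.2 - p2.2| < |p1.1 - p2.1|) (h2 : 0 < |p1.2 - p2.2|) :
    volume {q : ℝ × ℝ | dM q p1 = dM q p2} = 0 := by
  set s : Set (ℝ × ℝ) := {q : ℝ × ℝ | dM q p1 = dM q p2} with hs_def
  set s' : Set (ℝ × ℝ) := {q : ℝ × ℝ | dM (q.2, q.1) p1 = dM (q.2, q.1) p2} with hs'_def
  have hmeas : MeasurableSet s' := by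
    apply measurableSet_eq_fun <;> unfold dM <;> fun_prop
  have hswap : s = Prod.swap ⁻¹' s' := by
    ext q; simp [hs_def, hs'_def, Prod.swap]
  have hslice : ∀ y : ℝ, volume (Prod.mk y ⁻¹' s') = 0 := by
    intro y
    have hc : |(|y - p2.2| - |y - p1.2|)| < |p1.1 - p2.1| := by
      refine lt_of_le_of_lt (abs_abs_sub_abs_le_abs_sub _ _) ?_
      have : y - p2.2 - (y - p1.2) = p1.2 - p2.2 := by ring
      rw [this]; exact h1
    have key := subsingleton_aux p1.1 p2.1 (|y - p2.2| - |y - p1.2|) hc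
    have hsub : (Prod.mk y ⁻¹' s').Subsingleton := by
      intro x hx x' hx'
      simp only [Set.mem_preimage, hs'_def, Set.mem_setOf_eq, dM] at hx hx'
      exact key (by simp only [Set.mem_setOf_eq]; linarith)
        (by simp only [Set.mem_setOf_eq]; linarith)
    exact hsub.measure_zero _
  have hs' : (volume : Measure (ℝ × ℝ)) s' = 0 := by
    rw [Measure.volume_eq_prod, Measure.prod_apply hmeas]
    simp [hslice]
  calc volume s = volume (Prod.swap ⁻¹' s') := by rw [hswap]
    _ = volume s' := by
        rw [Measure.volume_eq_prod]
        rw [Measure.volume_eq_prod] at hs'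
        exact (Measure.measurePreserving_swap (μ := volume) (ν := volume)).measure_preimage
          hmeas.nullMeasurableSet
    _ = 0 := hs'
end

section
/- For two distinct points p1, p2 with |x1-x2| ≠ |y1-y2|, the Manhattan bisector of p1 and p2 is a closed set whose complement has exactly two connected components, one containing p1 and one containing p2. -/
open MeasureTheory

lemma dM_self (p : ℝ × ℝ) : dM p p = 0 := by simp [dM]

lemma dM_pos {p q : ℝ × ℝ} (h : p ≠ q) : 0 < dM p q := by
  have h1 : p.1 ≠ q.1 ∨ p.2 ≠ q.2 := by
    by_contra hc
    push_neg at hc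
    exact h (Prod.ext hc.1 hc.2)
  unfold dM
  rcases h1 with h1 | h1
  · have := abs_pos.mpr (sub_ne_zero.mpr h1)
    linarith [abs_nonneg (p.2 - q.2)]
  · have := abs_pos.mpr (sub_ne_zero.mpr h1)
    linarith [abs_nonneg (p.1 - q.1)]

lemma dM_triangle (a b c : ℝ × ℝ) : dM a c ≤ dM a b + dM b c := by
  have h1 : |a.1 - c.1| ≤ |a.1 - b.1| + |b.1 - c.1| := abs_sub_le _ _ _
  have h2 : |a.2 - c.2| ≤ |a.2 - b.2| + |b.2 - c.2| := abs_sub_le _ _ _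
  simp only [dM]; linarith

/-- If `r` lies on a Manhattan geodesic from `q` to `p1`, and `q` is strictly closer to
`p1` than to `p2`, so is `r`. -/
lemma closer_of_geodesic {p1 p2 q r : ℝ × ℝ} (hgeo : dM q r + dM r p1 = dM q p1)
    (hq : dM q p1 < dM q p2) : dM r p1 < dM r p2 := by
  have htri : dM q p2 ≤ dM q r + dM r p2 := dM_triangle q r p2
  linarith

lemma geodesic_horiz {q : ℝ × ℝ} (p1 : ℝ × ℝ) {r : ℝ × ℝ}
    (hr : r ∈ segment ℝ q (p1.1, q.2)) : dM q r + dM r p1 = dM q p1 := by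
  rcases hr with ⟨a, b, ha, hb, hab, hr⟩
  have hA : a = 1 - b := by linarith
  subst hA
  have h1 : r.1 = (1 - b) * q.1 + b * p1.1 := by rw [← hr]; simp
  have h2 : r.2 = q.2 := by rw [← hr]; simp; ring
  have e1 : q.1 - r.1 = b * (q.1 - p1.1) := by rw [h1]; ring
  have e2 : r.1 - p1.1 = (1 - b) * (q.1 - p1.1) := by rw [h1]; ring
  simp only [dM, h2, e1, e2, sub_self, abs_zero, abs_mul, abs_of_nonneg ha,
    abs_of_nonneg hb]
  ring

lemma geodesic_vert {q : ℝ × ℝ} (p1 : ℝ × ℝ) {r : ℝ × ℝ}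
    (hr : r ∈ segment ℝ (p1.1, q.2) p1) : dM q r + dM r p1 = dM q p1 := by
  rcases hr with ⟨a, b, ha, hb, hab, hr⟩
  have hA : a = 1 - b := by linarith
  subst hA
  have h1 : r.1 = p1.1 := by rw [← hr]; simp; ring
  have h2 : r.2 = (1 - b) * q.2 + b * p1.2 := by rw [← hr]; simp
  have e1 : q.2 - r.2 = b * (q.2 - p1.2) := by rw [h2]; ring
  have e2 : r.2 - p1.2 = (1 - b) * (q.2 - p1.2) := by rw [h2]; ring
  simp only [dM, h1, e1, e2, sub_self, abs_zero, abs_mul, abs_of_nonneg ha,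
    abs_of_nonneg hb]
  ring

/-- The strict "closer to p1" side is path-connected. -/
lemma side_pathConnected (p1 p2 : ℝ × ℝ) (hne : p1 ≠ p2) :
    IsPathConnected {q : ℝ × ℝ | dM q p1 < dM q p2} := by
  set S := {q : ℝ × ℝ | dM q p1 < dM q p2} with hS
  have hp1 : p1 ∈ S := by
    simp only [hS, Set.mem_setOf_eq, dM_self]
    exact dM_pos hne
  refine ⟨p1, hp1, ?_⟩
  intro q hq
  set m : ℝ × ℝ := (p1.1, q.2) with hm
  have hseg1 : segment ℝ q m ⊆ S := fun r hr =>
    closer_of_geodesic (geodesic_horiz p1 hr) hq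
  have hseg2 : segment ℝ m p1 ⊆ S := fun r hr =>
    closer_of_geodesic (geodesic_vert p1 hr) hq
  have j1 : JoinedIn S q m := by
    have := (convex_segment q m).isPathConnected ⟨q, left_mem_segment ℝ q m⟩
    exact (this.joinedIn q (left_mem_segment ℝ q m) m (right_mem_segment ℝ q m)).mono hseg1
  have j2 : JoinedIn S m p1 := by
    have := (convex_segment m p1).isPathConnected ⟨m, left_mem_segment ℝ m p1⟩
    exact (this.joinedIn m (left_mem_segment ℝ m p1) p1 (right_mem_segment ℝ m p1)).mono hseg2
  exact (j1.trans j2).symm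

lemma dM_continuous (p : ℝ × ℝ) : Continuous fun q : ℝ × ℝ => dM q p := by
  unfold dM
  fun_prop

theorem nondegenerate_bisector_two_components (p1 p2 : ℝ × ℝ) (hne : p1 ≠ p2)
    (h : |p1.1 - p2.1| ≠ |p1.2 - p2.2|) :
    IsClosed {q : ℝ × ℝ | dM q p1 = dM q p2} ∧
    p1 ∈ {q : ℝ × ℝ | dM q p1 = dM q p2}ᶜ ∧
    p2 ∈ {q : ℝ × ℝ | dM q p1 = dM q p2}ᶜ ∧
    connectedComponentIn {q : ℝ × ℝ | dM q p1 = dM q p2}ᶜ p1 ≠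
      connectedComponentIn {q : ℝ × ℝ | dM q p1 = dM q p2}ᶜ p2 ∧
    ∀ x ∈ {q : ℝ × ℝ | dM q p1 = dM q p2}ᶜ,
      x ∈ connectedComponentIn {q : ℝ × ℝ | dM q p1 = dM q p2}ᶜ p1 ∨
      x ∈ connectedComponentIn {q : ℝ × ℝ | dM q p1 = dM q p2}ᶜ p2 := by
  set B := {q : ℝ × ℝ | dM q p1 = dM q p2} with hB
  have hclosed : IsClosed B := isClosed_eq (dM_continuous p1) (dM_continuous p2)
  have hp1B : p1 ∈ Bᶜ := by
    simp only [hB, Set.mem_compl_iff, Set.mem_setOf_eq, dM_self]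
    exact ne_of_lt (dM_pos hne)
  have hp2B : p2 ∈ Bᶜ := by
    simp only [hB, Set.mem_compl_iff, Set.mem_setOf_eq, dM_self]
    exact (ne_of_lt (dM_pos hne.symm)).symm
  have hS1 : IsPathConnected {q : ℝ × ℝ | dM q p1 < dM q p2} := side_pathConnected p1 p2 hne
  have hS2 : IsPathConnected {q : ℝ × ℝ | dM q p2 < dM q p1} := side_pathConnected p2 p1 hne.symm
  have hS1sub : {q : ℝ × ℝ | dM q p1 < dM q p2} ⊆ Bᶜ := fun q hq => ne_of_lt hq
  have hS2sub : {q : ℝ × ℝ | dM q p2 < dM q p1} ⊆ Bᶜ := fun q hq => (ne_of_lt hq).symm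
  have hp1S1 : p1 ∈ {q : ℝ × ℝ | dM q p1 < dM q p2} := by
    simp only [Set.mem_setOf_eq, dM_self]; exact dM_pos hne
  have hp2S2 : p2 ∈ {q : ℝ × ℝ | dM q p2 < dM q p1} := by
    simp only [Set.mem_setOf_eq, dM_self]; exact dM_pos hne.symm
  have hcomp1 : {q : ℝ × ℝ | dM q p1 < dM q p2} ⊆ connectedComponentIn Bᶜ p1 :=
    hS1.isConnected.isPreconnected.subset_connectedComponentIn hp1S1 hS1sub
  have hcomp2 : {q : ℝ × ℝ | dM q p2 < dM q p1} ⊆ connectedComponentIn Bᶜ p2 :=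
    hS2.isConnected.isPreconnected.subset_connectedComponentIn hp2S2 hS2sub
  refine ⟨hclosed, hp1B, hp2B, ?_, ?_⟩
  · intro heq
    have hp2mem : p2 ∈ connectedComponentIn Bᶜ p1 := by
      rw [heq]; exact mem_connectedComponentIn hp2B
    have hp1mem : p1 ∈ connectedComponentIn Bᶜ p1 := mem_connectedComponentIn hp1B
    have hconn : IsPreconnected (connectedComponentIn Bᶜ p1) :=
      isPreconnected_connectedComponentIn
    have hsub : connectedComponentIn Bᶜ p1 ⊆ Bᶜ := connectedComponentIn_subset _ _
    have hcont : ContinuousOn (fun q : ℝ × ℝ => dM q p1 - dM q p2)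
        (connectedComponentIn Bᶜ p1) :=
      ((dM_continuous p1).sub (dM_continuous p2)).continuousOn
    have hivt := hconn.intermediate_value hp1mem hp2mem hcont
    have h0 : (0:ℝ) ∈ Set.Icc (dM p1 p1 - dM p1 p2) (dM p2 p1 - dM p2 p2) := by
      constructor
      · simp only [dM_self]; have := dM_pos hne; linarith
      · simp only [dM_self]; have := dM_pos (hne.symm : p2 ≠ p1); linarith
    rcases hivt h0 with ⟨x, hx, hfx⟩
    have hfx' : dM x p1 - dM x p2 = 0 := hfx
    have : x ∈ B := by
      simp only [hB, Set.mem_setOf_eq]; linarith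
    exact hsub hx this
  · intro x hx
    have hxne : dM x p1 ≠ dM x p2 := hx
    rcases lt_or_gt_of_ne hxne with hlt | hgt
    · exact Or.inl (hcomp1 hlt)
    · exact Or.inr (hcomp2 hgt)
end

section
/- Let P be a finite set of points in ℝ² and p ∈ P. The Manhattan Voronoi cell V(p) = {q : ∀ r ∈ P, r ≠ p → d_M(q,p) < d_M(q,r)} is star-shaped with respect to p; that is, for every q ∈ V(p), every point on the segment from p to q lies in V(p). -/
theorem voronoi_cell_star_shaped (P : Finset (ℝ × ℝ)) (p : ℝ × ℝ) (hp : p ∈ P)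
    (q : ℝ × ℝ) (hq : q ∈ {z : ℝ × ℝ | ∀ r ∈ P, r ≠ p → dM z p < dM z r}) :
    segment ℝ p q ⊆ {z : ℝ × ℝ | ∀ r ∈ P, r ≠ p → dM z p < dM z r} := by
  rintro z ⟨a, b, ha, hb, hab, rfl⟩ r hr hrp
  have hq' : dM q p < dM q r := hq r hr hrp
  simp only [dM, Set.mem_setOf_eq] at *
  have hz1 : (a • p + b • q).1 = a * p.1 + b * q.1 := rfl
  have hz2 : (a • p + b • q).2 = a * p.2 + b * q.2 := rfl
  set A1 := |q.1 - p.1| with hA1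
  set A2 := |q.2 - p.2| with hA2
  have e1 : |(a • p + b • q).1 - p.1| = b * A1 := by
    rw [hz1, hA1, show a * p.1 + b * q.1 - p.1 = b * (q.1 - p.1) by
      have : a = 1 - b := by linarith
      rw [this]; ring, abs_mul, abs_of_nonneg hb]
  have e2 : |(a • p + b • q).2 - p.2| = b * A2 := by
    rw [hz2, hA2, show a * p.2 + b * q.2 - p.2 = b * (q.2 - p.2) by
      have : a = 1 - b := by linarith
      rw [this]; ring, abs_mul, abs_of_nonneg hb]
  have f1 : |q.1 - (a • p + b • q).1| = a * A1 := by
    rw [hz1, hA1, show q.1 - (a * p.1 + b * q.1) = a * (q.1 - p.1) by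
      have : b = 1 - a := by linarith
      rw [this]; ring, abs_mul, abs_of_nonneg ha]
  have f2 : |q.2 - (a • p + b • q).2| = a * A2 := by
    rw [hz2, hA2, show q.2 - (a * p.2 + b * q.2) = a * (q.2 - p.2) by
      have : b = 1 - a := by linarith
      rw [this]; ring, abs_mul, abs_of_nonneg ha]
  have t1 : |q.1 - r.1| ≤ |q.1 - (a • p + b • q).1| + |(a • p + b • q).1 - r.1| := by
    have := abs_sub_abs_le_abs_sub (q.1 - r.1) ((a • p + b • q).1 - r.1)
    calc |q.1 - r.1| = |(q.1 - (a • p + b • q).1) + ((a • p + b • q).1 - r.1)| := by ring_nf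
      _ ≤ _ := abs_add_le _ _
  have t2 : |q.2 - r.2| ≤ |q.2 - (a • p + b • q).2| + |(a • p + b • q).2 - r.2| := by
    calc |q.2 - r.2| = |(q.2 - (a • p + b • q).2) + ((a • p + b • q).2 - r.2)| := by ring_nf
      _ ≤ _ := abs_add_le _ _
  rw [f1] at t1
  rw [f2] at t2
  rw [e1, e2]
  have key1 : a * A1 + b * A1 = A1 := by rw [← add_mul, hab, one_mul]
  have key2 : a * A2 + b * A2 = A2 := by rw [← add_mul, hab, one_mul]
  linarith
end

section
/- Let K be a measurable subset of ℝ² with finite area whose intersection with the vertical line through p has measure zero, and suppose the area of K strictly to the left of p exceeds the area strictly to the right. Then the function p ↦ ∫_K d_M(q,p) dq strictly decreases when p is moved leftwards by a sufficiently small ε > 0 (with the y-coordinate fixed). -/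
open MeasureTheory

lemma gK_integrableOn (K : Set (ℝ × ℝ)) (hfin : volume K ≠ ⊤) (a ε : ℝ) (hε : 0 < ε) :
    IntegrableOn (fun q : ℝ × ℝ => |q.1 - (a - ε)| - |q.1 - a|) K volume := by
  apply Measure.integrableOn_of_bounded hfin
  · exact (Continuous.sub ((continuous_fst.sub continuous_const).abs)
      ((continuous_fst.sub continuous_const).abs)).aestronglyMeasurable
  · refine MeasureTheory.ae_of_all _ fun q => ?_
    have h := abs_sub_abs_le_abs_sub (q.1 - (a - ε)) (q.1 - a)
    have h' := abs_sub_abs_le_abs_sub (q.1 - a) (q.1 - (a - ε))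
    have he : |(q.1 - (a - ε)) - (q.1 - a)| = ε := by
      rw [show (q.1 - (a - ε)) - (q.1 - a) = ε by ring, abs_of_pos hε]
    have he' : |(q.1 - a) - (q.1 - (a - ε))| = ε := by
      rw [show (q.1 - a) - (q.1 - (a - ε)) = -ε by ring, abs_neg, abs_of_pos hε]
    rw [Real.norm_eq_abs, abs_sub_le_iff]
    constructor
    · rw [he] at h; exact h
    · rw [he'] at h'; exact h'

/-- The key estimate: the integral of the change of `|x|`-distance is at most
`ε * (C + B - A)` where `A, B, C` are the measures of the left, middle, right parts. -/
lemma key_estimate (K : Set (ℝ × ℝ)) (hK : MeasurableSet K) (hfin : volume K ≠ ⊤)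
    (a ε : ℝ) (hε : 0 < ε) :
    (∫ q in K, (|q.1 - (a - ε)| - |q.1 - a|)) ≤
      ε * ((volume (K ∩ {q | a ≤ q.1})).toReal
        + (volume (K ∩ {q | a - ε < q.1 ∧ q.1 < a})).toReal
        - (volume (K ∩ {q | q.1 ≤ a - ε})).toReal) := by
  set g : ℝ × ℝ → ℝ := fun q => |q.1 - (a - ε)| - |q.1 - a| with hg
  set A := K ∩ {q : ℝ × ℝ | q.1 ≤ a - ε} with hA
  set B := K ∩ {q : ℝ × ℝ | a - ε < q.1 ∧ q.1 < a} with hB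
  set C := K ∩ {q : ℝ × ℝ | a ≤ q.1} with hC
  have hAm : MeasurableSet A := hK.inter (measurableSet_le measurable_fst measurable_const)
  have hBm : MeasurableSet B := hK.inter
    ((measurableSet_lt measurable_const measurable_fst).inter
      (measurableSet_lt measurable_fst measurable_const))
  have hCm : MeasurableSet C := hK.inter (measurableSet_le measurable_const measurable_fst)
  have hKeq : K = A ∪ (B ∪ C) := by
    ext q
    simp only [hA, hB, hC, Set.mem_union, Set.mem_inter_iff, Set.mem_setOf_eq]
    constructor
    · intro hq
      rcases le_or_gt q.1 (a - ε) with h | h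
      · exact Or.inl ⟨hq, h⟩
      · rcases lt_or_ge q.1 a with h2 | h2
        · exact Or.inr (Or.inl ⟨hq, h, h2⟩)
        · exact Or.inr (Or.inr ⟨hq, h2⟩)
    · rintro (⟨h, _⟩ | ⟨h, _⟩ | ⟨h, _⟩) <;> exact h
  have hgA : IntegrableOn g A volume :=
    (gK_integrableOn K hfin a ε hε).mono_set Set.inter_subset_left
  have hgB : IntegrableOn g B volume :=
    (gK_integrableOn K hfin a ε hε).mono_set Set.inter_subset_left
  have hgC : IntegrableOn g C volume :=
    (gK_integrableOn K hfin a ε hε).mono_set Set.inter_subset_left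
  have hdisj1 : Disjoint A (B ∪ C) := by
    rw [Set.disjoint_union_right]
    constructor
    · refine Set.disjoint_left.2 fun q hq hq' => ?_
      have h1 : q.1 ≤ a - ε := hq.2
      have h2 : a - ε < q.1 := hq'.2.1
      linarith
    · refine Set.disjoint_left.2 fun q hq hq' => ?_
      have h1 : q.1 ≤ a - ε := hq.2
      have h2 : a ≤ q.1 := hq'.2
      linarith
  have hdisj2 : Disjoint B C := by
    refine Set.disjoint_left.2 fun q hq hq' => ?_
    have h1 : q.1 < a := hq.2.2
    have h2 : a ≤ q.1 := hq'.2
    linarith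
  have hsplit : (∫ q in K, g q) = (∫ q in A, g q) + ((∫ q in B, g q) + (∫ q in C, g q)) := by
    rw [hKeq, setIntegral_union hdisj1 (hBm.union hCm) hgA (hgB.union hgC),
      setIntegral_union hdisj2 hCm hgB hgC]
  have hfA : volume A ≠ ⊤ := fun h => hfin (top_le_iff.1 (h ▸ measure_mono Set.inter_subset_left))
  have hfB : volume B ≠ ⊤ := fun h => hfin (top_le_iff.1 (h ▸ measure_mono Set.inter_subset_left))
  have hfC : volume C ≠ ⊤ := fun h => hfin (top_le_iff.1 (h ▸ measure_mono Set.inter_subset_left))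
  have hintA : (∫ q in A, g q) = -(ε * (volume A).toReal) := by
    rw [setIntegral_congr_fun hAm (g := fun _ => -ε) (fun q hq => ?_), setIntegral_const]
    · rw [smul_eq_mul, measureReal_def]; ring
    · have h1 : q.1 ≤ a - ε := hq.2
      simp only [hg]
      rw [abs_of_nonpos (by linarith), abs_of_nonpos (by linarith)]
      ring
  have hintC : (∫ q in C, g q) = ε * (volume C).toReal := by
    rw [setIntegral_congr_fun hCm (g := fun _ => ε) (fun q hq => ?_), setIntegral_const]
    · rw [smul_eq_mul, measureReal_def]; ring
    · have h1 : a ≤ q.1 := hq.2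
      simp only [hg]
      rw [abs_of_nonneg (by linarith), abs_of_nonneg (by linarith)]
      ring
  have hintB : (∫ q in B, g q) ≤ ε * (volume B).toReal := by
    have := setIntegral_mono_on hgB (integrableOn_const hfB) hBm
      (f := g) (g := fun _ => ε) (fun q hq => ?_)
    · rw [setIntegral_const, smul_eq_mul, measureReal_def] at this; linarith [this]
    · have h1 : a - ε < q.1 := hq.2.1
      have h2 : q.1 < a := hq.2.2
      simp only [hg]
      rw [abs_of_pos (by linarith), abs_of_neg (by linarith)]
      linarith
  rw [hsplit, hintA, hintC]
  have := hintB
  nlinarith [hintB]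

theorem moving_left_decreases_average_distance (K : Set (ℝ × ℝ)) (hK : MeasurableSet K)
    (hfin : volume K ≠ ⊤) (p : ℝ × ℝ)
    (hint : IntegrableOn (fun q => dM q p) K volume)
    (hline : volume (K ∩ {q | q.1 = p.1}) = 0)
    (hlr : volume (K ∩ {q | p.1 < q.1}) < volume (K ∩ {q | q.1 < p.1})) :
    ∃ ε₀ : ℝ, 0 < ε₀ ∧ ∀ ε : ℝ, 0 < ε → ε ≤ ε₀ →
      (∫ q in K, dM q (p.1 - ε, p.2)) < ∫ q in K, dM q p := by
  set a := p.1 with ha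
  set L := volume (K ∩ {q : ℝ × ℝ | q.1 < a}) with hL
  set R := volume (K ∩ {q : ℝ × ℝ | a < q.1}) with hR
  have hLfin : L ≠ ⊤ := fun h => hfin (top_le_iff.1 (h ▸ measure_mono Set.inter_subset_left))
  have hRfin : R ≠ ⊤ := fun h => hfin (top_le_iff.1 (h ▸ measure_mono Set.inter_subset_left))
  -- measure of the right closed half equals R
  have hCR : volume (K ∩ {q : ℝ × ℝ | a ≤ q.1}) = R := by
    apply le_antisymm
    · have hsub : K ∩ {q : ℝ × ℝ | a ≤ q.1} ⊆
          (K ∩ {q : ℝ × ℝ | a < q.1}) ∪ (K ∩ {q : ℝ × ℝ | q.1 = a}) := by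
        rintro q ⟨hq, hq2⟩
        have hq2' : a ≤ q.1 := hq2
        rcases lt_or_eq_of_le hq2' with h | h
        · exact Or.inl ⟨hq, h⟩
        · exact Or.inr ⟨hq, h.symm⟩
      calc volume (K ∩ {q : ℝ × ℝ | a ≤ q.1})
          ≤ volume ((K ∩ {q : ℝ × ℝ | a < q.1}) ∪ (K ∩ {q : ℝ × ℝ | q.1 = a})) :=
            measure_mono hsub
        _ ≤ volume (K ∩ {q : ℝ × ℝ | a < q.1}) + volume (K ∩ {q : ℝ × ℝ | q.1 = a}) :=
            measure_union_le _ _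
        _ = R := by rw [hline]; simp [hR]
    · apply measure_mono
      apply Set.inter_subset_inter_right
      intro q hq
      have h1 : a < q.1 := hq
      show a ≤ q.1
      exact le_of_lt h1
  -- choose ε₀
  obtain ⟨ε₀, hε₀pos, hε₀⟩ : ∃ ε₀ : ℝ, 0 < ε₀ ∧
      (R.toReal + L.toReal) / 2 < (volume (K ∩ {q : ℝ × ℝ | q.1 ≤ a - ε₀})).toReal := by
    set s : ℕ → Set (ℝ × ℝ) := fun n => K ∩ {q : ℝ × ℝ | q.1 ≤ a - 1 / (n + 1)} with hs
    have hmono : Monotone s := by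
      intro m n hmn
      apply Set.inter_subset_inter_right
      intro q hq
      have hq' : q.1 ≤ a - 1 / (m + 1) := hq
      have h1 : (1 : ℝ) / (n + 1) ≤ 1 / (m + 1) := by
        apply one_div_le_one_div_of_le (by positivity)
        exact_mod_cast by omega
      show q.1 ≤ a - 1 / (n + 1)
      linarith
    have hunion : (⋃ n, s n) = K ∩ {q : ℝ × ℝ | q.1 < a} := by
      ext q
      simp only [hs, Set.mem_iUnion, Set.mem_inter_iff, Set.mem_setOf_eq]
      constructor
      · rintro ⟨n, hq, hle⟩
        have : (0:ℝ) < 1 / ((n:ℝ) + 1) := by positivity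
        exact ⟨hq, by linarith⟩
      · rintro ⟨hq, hlt⟩
        obtain ⟨n, hn⟩ := exists_nat_one_div_lt (show (0:ℝ) < a - q.1 by linarith)
        exact ⟨n, hq, by linarith⟩
    have htend : Filter.Tendsto (fun n => volume (s n)) Filter.atTop (nhds L) := by
      have := tendsto_measure_iUnion_atTop (μ := volume) hmono
      rwa [hunion, ← hL] at this
    have htendR : Filter.Tendsto (fun n => (volume (s n)).toReal) Filter.atTop
        (nhds L.toReal) := (ENNReal.tendsto_toReal hLfin).comp htend
    have hRL : R.toReal < L.toReal := by
      exact ENNReal.toReal_lt_toReal hRfin hLfin |>.2 hlr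
    have hlt : (R.toReal + L.toReal) / 2 < L.toReal := by linarith
    have hev := htendR.eventually (eventually_gt_nhds hlt)
    obtain ⟨n, hn⟩ := hev.exists
    refine ⟨1 / (n + 1), by positivity, ?_⟩
    exact hn
  refine ⟨ε₀, hε₀pos, fun ε hε hεle => ?_⟩
  set g : ℝ × ℝ → ℝ := fun q => |q.1 - (a - ε)| - |q.1 - a| with hg
  have hgint : IntegrableOn g K volume := gK_integrableOn K hfin a ε hε
  -- pointwise identity
  have hpt : ∀ q : ℝ × ℝ, dM q (a - ε, p.2) = dM q p + g q := by
    intro q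
    simp only [dM, hg]
    ring
  have hint2 : IntegrableOn (fun q => dM q (a - ε, p.2)) K volume := by
    have h := hint.add hgint
    rw [show (fun q => dM q (a - ε, p.2)) = fun q => dM q p + g q from funext hpt]
    exact h
  have hIeq : (∫ q in K, dM q (a - ε, p.2)) = (∫ q in K, dM q p) + ∫ q in K, g q := by
    rw [show (fun q => dM q (a - ε, p.2)) = fun q => dM q p + g q from funext hpt]
    exact integral_add hint hgint
  -- the measures
  set A := volume (K ∩ {q : ℝ × ℝ | q.1 ≤ a - ε}) with hAd
  set B := volume (K ∩ {q : ℝ × ℝ | a - ε < q.1 ∧ q.1 < a}) with hBd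
  have hAfin : A ≠ ⊤ := fun h => hfin (top_le_iff.1 (h ▸ measure_mono Set.inter_subset_left))
  have hBfin : B ≠ ⊤ := fun h => hfin (top_le_iff.1 (h ▸ measure_mono Set.inter_subset_left))
  have hABL : A + B = L := by
    rw [hAd, hBd, hL]
    rw [← measure_union (s₂ := K ∩ {q : ℝ × ℝ | a - ε < q.1 ∧ q.1 < a}) ?_
      (hK.inter (((measurableSet_lt measurable_const measurable_fst).inter
      (measurableSet_lt measurable_fst measurable_const))))]
    · congr 1
      ext q
      simp only [Set.mem_union, Set.mem_inter_iff, Set.mem_setOf_eq]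
      constructor
      · rintro (⟨hq, h⟩ | ⟨hq, h1, h2⟩)
        · exact ⟨hq, by linarith⟩
        · exact ⟨hq, h2⟩
      · rintro ⟨hq, h⟩
        rcases le_or_gt q.1 (a - ε) with h2 | h2
        · exact Or.inl ⟨hq, h2⟩
        · exact Or.inr ⟨hq, h2, h⟩
    · refine Set.disjoint_left.2 fun q hq hq' => ?_
      have h1 : q.1 ≤ a - ε := hq.2
      have h2 : a - ε < q.1 := hq'.2.1
      linarith
  -- A ≥ measure at ε₀
  have hAge : (volume (K ∩ {q : ℝ × ℝ | q.1 ≤ a - ε₀})).toReal ≤ A.toReal := by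
    apply ENNReal.toReal_le_toReal _ hAfin |>.2
    · apply measure_mono
      apply Set.inter_subset_inter_right
      intro q hq
      have hq' : q.1 ≤ a - ε₀ := hq
      show q.1 ≤ a - ε
      linarith
    · exact fun h => hfin (top_le_iff.1 (h ▸ measure_mono Set.inter_subset_left))
  have hABLr : A.toReal + B.toReal = L.toReal := by
    rw [← ENNReal.toReal_add hAfin hBfin, hABL]
  have hest := key_estimate K hK hfin a ε hε
  rw [hCR] at hest
  have hAbig : (R.toReal + L.toReal) / 2 < A.toReal := lt_of_lt_of_le hε₀ hAge
  have hneg : (∫ q in K, g q) < 0 := by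
    apply lt_of_le_of_lt hest
    have : R.toReal + B.toReal - A.toReal < 0 := by linarith
    nlinarith
  rw [show (p.1 - ε, p.2) = (a - ε, p.2) from rfl, hIeq]
  linarith
end

section
/- Let W be a finite set of points in a rectangle R, w ∈ W, and let H be the left half cell of w (the part of the Manhattan Voronoi cell of w weakly left of the vertical line through w). For every ε > 0 there exists δ > 0 such that placing a new point b = w - (δ, 0) yields area(V^{W∪{b}}(b) ∩ H) ≥ area(H) - ε. -/
open MeasureTheory

/-- The (open) Manhattan Voronoi cell of `p` among the sites `P`, within the region `R`. -/
def cell (R : Set (ℝ × ℝ)) (P : Finset (ℝ × ℝ)) (p : ℝ × ℝ) : Set (ℝ × ℝ) :=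
  {q | q ∈ R ∧ ∀ r ∈ P, r ≠ p → dM q p < dM q r}

theorem black_can_steal_half_cell (w h : ℝ) (W : Finset (ℝ × ℝ))
    (hWR : ↑W ⊆ Set.Icc ((0, 0) : ℝ × ℝ) (w, h)) (p : ℝ × ℝ) (hp : p ∈ W)
    (ε : ℝ) (hε : 0 < ε) :
    ∃ δ : ℝ, 0 < δ ∧
      volume (cell (Set.Icc ((0, 0) : ℝ × ℝ) (w, h)) (insert ((p.1 - δ, p.2)) W)
              ((p.1 - δ, p.2)) ∩
            (cell (Set.Icc ((0, 0) : ℝ × ℝ) (w, h)) W p ∩ {q | q.1 ≤ p.1}))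
        ≥ volume (cell (Set.Icc ((0, 0) : ℝ × ℝ) (w, h)) W p ∩ {q | q.1 ≤ p.1})
            - ENNReal.ofReal ε := by
  have hmax : (0:ℝ) < max h 1 := lt_of_lt_of_le one_pos (le_max_right h 1)
  refine ⟨ε / max h 1, div_pos hε hmax, ?_⟩
  set δ := ε / max h 1 with hδdef
  have hδ : 0 < δ := div_pos hε hmax
  set R := Set.Icc ((0, 0) : ℝ × ℝ) (w, h) with hR
  set b : ℝ × ℝ := (p.1 - δ, p.2) with hb
  set H := cell R W p ∩ {q : ℝ × ℝ | q.1 ≤ p.1} with hH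
  set A := cell R W p ∩ {q : ℝ × ℝ | q.1 ≤ p.1 - δ} with hA
  have hAsub : A ⊆ cell R (insert b W) b ∩ H := by
    rintro q ⟨⟨hqR, hq⟩, hq1⟩
    have hq1' : q.1 ≤ p.1 - δ := hq1
    refine ⟨⟨hqR, ?_⟩, ⟨hqR, hq⟩, by simp only [Set.mem_setOf_eq]; linarith⟩
    intro r hr hrb
    have hbd : dM q b = dM q p - δ := by
      simp only [dM, hb]
      have h1 : |q.1 - (p.1 - δ)| = |q.1 - p.1| - δ := by
        rw [abs_of_nonpos (by linarith), abs_of_nonpos (by linarith)]; ring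
      rw [h1]; ring
    rcases Finset.mem_insert.mp hr with h1 | h2
    · exact absurd h1 hrb
    · by_cases hrp : r = p
      · subst hrp; linarith
      · have := hq r h2 hrp; linarith
  have hdiff : H \ A ⊆ Set.Ioc (p.1 - δ) p.1 ×ˢ Set.Icc (0:ℝ) h := by
    rintro q ⟨⟨hcell, hq1⟩, hqA⟩
    have hq1' : q.1 ≤ p.1 := hq1
    have hnot : ¬ q.1 ≤ p.1 - δ := fun hc => hqA ⟨hcell, hc⟩
    refine ⟨⟨by linarith, hq1'⟩, hcell.1.1.2, hcell.1.2.2⟩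
  have hstrip : volume (Set.Ioc (p.1 - δ) p.1 ×ˢ Set.Icc (0:ℝ) h) ≤ ENNReal.ofReal ε := by
    rw [Measure.volume_eq_prod, Measure.prod_prod, Real.volume_Ioc, Real.volume_Icc,
      ← ENNReal.ofReal_mul (by linarith)]
    apply ENNReal.ofReal_le_ofReal
    have h1 : h ≤ max h 1 := le_max_left h 1
    have h2 : δ * max h 1 = ε := div_mul_cancel₀ ε hmax.ne'
    nlinarith
  have hkey : volume H ≤ volume (cell R (insert b W) b ∩ H) + ENNReal.ofReal ε := by
    calc volume H ≤ volume (A ∪ (H \ A)) := by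
          apply measure_mono
          intro q hq
          by_cases hqa : q ∈ A
          · exact Or.inl hqa
          · exact Or.inr ⟨hq, hqa⟩
      _ ≤ volume A + volume (H \ A) := measure_union_le _ _
      _ ≤ _ := add_le_add (measure_mono hAsub)
          (le_trans (measure_mono hdiff) hstrip)
  exact tsub_le_iff_right.mpr hkey
end

section
/- Let W be the 1×n grid in R = [0,ρ] × [0,1] with ρ ≥ n, i.e., W = {((2i-1)ρ/(2n), 1/2) : i = 1,…,n}. For every point b ∉ W placed on the horizontal centre line y = 1/2 strictly between two consecutive grid points, the Manhattan Voronoi cell of b with respect to W ∪ {b} has area exactly ρ/(2n), and for b placed at height |y - 1/2| = t > 0 between two grid points (with horizontal distance to the nearest grid point exceeding t), the cell area is ρ/(2n) - t². -/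
open MeasureTheory

/-- The `1 × n` grid of white points in the rectangle `[0,ρ] × [0,1]`. -/
def grid (n : ℕ) (ρ : ℝ) : Set (ℝ × ℝ) :=
  {q | ∃ i : ℕ, 1 ≤ i ∧ i ≤ n ∧ q = ((2*(i:ℝ) - 1) * ρ / (2*(n:ℝ)), 1/2)}

/-- x-coordinate of the j-th grid point. -/
noncomputable def Xp (n j : ℕ) (ρ : ℝ) : ℝ := (2*(j:ℝ) - 1) * ρ / (2*(n:ℝ))

lemma integral_abs_sub (c : ℝ) (h0 : 0 ≤ c) (h1 : c ≤ 1) :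
    ∫ y in (0:ℝ)..1, |y - c| = c^2 - c + 1/2 := by
  have hcont : Continuous fun y : ℝ => |y - c| :=
    continuous_abs.comp (continuous_id.sub continuous_const)
  have hi : ∀ a b : ℝ, IntervalIntegrable (fun y => |y - c|) volume a b :=
    fun a b => hcont.intervalIntegrable a b
  rw [← intervalIntegral.integral_add_adjacent_intervals (hi 0 c) (hi c 1)]
  have e1 : ∫ y in (0:ℝ)..c, |y - c| = ∫ y in (0:ℝ)..c, (c - y) := by
    apply intervalIntegral.integral_congr
    intro y hy
    rw [Set.uIcc_of_le h0, Set.mem_Icc] at hy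
    show |y - c| = c - y
    rw [abs_of_nonpos (by linarith [hy.2])]; ring
  have e2 : ∫ y in c..(1:ℝ), |y - c| = ∫ y in c..(1:ℝ), (y - c) := by
    apply intervalIntegral.integral_congr
    intro y hy
    rw [Set.uIcc_of_le h1, Set.mem_Icc] at hy
    show |y - c| = y - c
    rw [abs_of_nonneg (by linarith [hy.1])]
  have i1 : ∫ y in (0:ℝ)..c, (c - y) = c^2/2 := by
    rw [intervalIntegral.integral_sub (continuous_const.intervalIntegrable _ _)
      intervalIntegral.intervalIntegrable_id, intervalIntegral.integral_const,
      integral_id]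
    simp; ring
  have i2 : ∫ y in c..(1:ℝ), (y - c) = (1-c)^2/2 := by
    rw [intervalIntegral.integral_sub intervalIntegral.intervalIntegrable_id
      (continuous_const.intervalIntegrable _ _), intervalIntegral.integral_const,
      integral_id]
    simp; ring
  rw [e1, e2, i1, i2]; ring

lemma cell_volume (n i : ℕ) (ρ β b2 t : ℝ) (hn : 1 ≤ n) (hρ : (n:ℝ) ≤ ρ)
    (hi1 : 1 ≤ i) (hin : i + 1 ≤ n)
    (ht0 : 0 ≤ t) (htb : |b2 - 1/2| = t) (hb20 : 0 ≤ b2) (hb21 : b2 ≤ 1)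
    (hl : Xp n i ρ + t < β) (hr : β < Xp n (i+1) ρ - t) :
    volume {q : ℝ × ℝ | q ∈ Set.Icc ((0, 0) : ℝ × ℝ) (ρ, 1) ∧
        ∀ w ∈ grid n ρ, dM q (β, b2) < dM q w}
      = ENNReal.ofReal (ρ / (2*(n:ℝ)) - t^2) := by
  have hn0 : (0:ℝ) < (n:ℝ) := by exact_mod_cast hn
  have hρ0 : (0:ℝ) < ρ := lt_of_lt_of_le hn0 hρ
  have hd : (1:ℝ)/2 ≤ ρ / (2*(n:ℝ)) := by
    rw [le_div_iff₀ (by positivity)]; linarith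
  have ht2 : t ≤ 1/2 := by
    rw [← htb]; rw [abs_le]; constructor <;> linarith
  have hgu : ∀ y : ℝ, |y - 1/2| - |y - b2| ≤ t := by
    intro y
    have h := (abs_abs_sub_abs_le_abs_sub (y - 1/2) (y - b2))
    rw [show (y - 1/2) - (y - b2) = b2 - 1/2 by ring, htb] at h
    linarith [(abs_le.mp h).2]
  have hgl : ∀ y : ℝ, -t ≤ |y - 1/2| - |y - b2| := by
    intro y
    have h := (abs_abs_sub_abs_le_abs_sub (y - 1/2) (y - b2))
    rw [show (y - 1/2) - (y - b2) = b2 - 1/2 by ring, htb] at h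
    linarith [(abs_le.mp h).1]
  have hmono : ∀ j k : ℕ, j ≤ k → Xp n j ρ ≤ Xp n k ρ := by
    intro j k hjk
    have hjk' : (j:ℝ) ≤ (k:ℝ) := by exact_mod_cast hjk
    unfold Xp
    rw [div_le_div_iff₀ (by positivity) (by positivity)]
    have := mul_le_mul_of_nonneg_right (mul_le_mul_of_nonneg_right
      (show 2*(j:ℝ)-1 ≤ 2*(k:ℝ)-1 by linarith) hρ0.le) (show (0:ℝ) ≤ 2*(n:ℝ) by positivity)
    linarith
  have hX1 : 0 < Xp n 1 ρ := by
    unfold Xp; push_cast; positivity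
  have hXn : Xp n n ρ < ρ := by
    unfold Xp
    rw [div_lt_iff₀ (by positivity)]; nlinarith
  -- the cell is the region between two piecewise-linear graphs
  have hset : {q : ℝ × ℝ | q ∈ Set.Icc ((0, 0) : ℝ × ℝ) (ρ, 1) ∧
        ∀ w ∈ grid n ρ, dM q (β, b2) < dM q w}
      = {q : ℝ × ℝ | (0 ≤ q.2 ∧ q.2 ≤ 1) ∧
          (β + Xp n i ρ - (|q.2 - 1/2| - |q.2 - b2|))/2 < q.1 ∧
          q.1 < (β + Xp n (i+1) ρ + (|q.2 - 1/2| - |q.2 - b2|))/2} := by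
    ext ⟨x, y⟩
    simp only [Set.mem_setOf_eq, Set.mem_Icc, Prod.mk_le_mk]
    constructor
    · rintro ⟨⟨⟨hx0, hy0⟩, hxρ, hy1⟩, hW⟩
      have hWi := hW (Xp n i ρ, 1/2) ⟨i, hi1, by omega, rfl⟩
      have hWi1 := hW (Xp n (i+1) ρ, 1/2) ⟨i+1, by omega, hin, rfl⟩
      simp only [dM] at hWi hWi1
      have hbx : β - x ≤ |x - β| := by rw [abs_sub_comm]; exact le_abs_self _
      have hxb : x - β ≤ |x - β| := le_abs_self _
      have hxi : Xp n i ρ < x := by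
        by_contra h; push_neg at h
        have h2 : |x - Xp n i ρ| = Xp n i ρ - x := by
          rw [abs_sub_comm]; exact abs_of_nonneg (by linarith)
        rw [h2] at hWi; linarith [hgu y]
      have hxi1 : x < Xp n (i+1) ρ := by
        by_contra h; push_neg at h
        have h2 : |x - Xp n (i+1) ρ| = x - Xp n (i+1) ρ := abs_of_nonneg (by linarith)
        rw [h2] at hWi1; linarith [hgu y]
      have h2 : |x - Xp n i ρ| = x - Xp n i ρ := abs_of_nonneg (by linarith)
      have h3 : |x - Xp n (i+1) ρ| = Xp n (i+1) ρ - x := by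
        rw [abs_sub_comm]; exact abs_of_nonneg (by linarith)
      rw [h2] at hWi; rw [h3] at hWi1
      exact ⟨⟨hy0, hy1⟩, by linarith, by linarith⟩
    · rintro ⟨⟨hy0, hy1⟩, hA, hB⟩
      have hgyl := hgl y
      have hgyu := hgu y
      have hxi : Xp n i ρ < x := by linarith
      have hxi1 : x < Xp n (i+1) ρ := by linarith
      have hx0 : 0 ≤ x := le_of_lt (lt_trans (lt_of_lt_of_le hX1 (hmono 1 i hi1)) hxi)
      have hxρ : x ≤ ρ := le_of_lt (lt_trans (lt_of_lt_of_le hxi1 (hmono (i+1) n hin)) hXn)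
      refine ⟨⟨⟨hx0, hy0⟩, hxρ, hy1⟩, ?_⟩
      rintro w ⟨j, hj1, hjn, rfl⟩
      simp only [dM]
      rcases le_or_gt j i with hji | hji
      · have hXj : Xp n j ρ ≤ Xp n i ρ := hmono j i hji
        have habs : |x - (2*(j:ℝ) - 1) * ρ / (2*(n:ℝ))| = x - Xp n j ρ := by
          show |x - Xp n j ρ| = _
          exact abs_of_nonneg (by linarith)
        rw [habs]
        have h4 : |x - β| < x - Xp n j ρ + (|y - 1/2| - |y - b2|) :=
          abs_sub_lt_iff.mpr ⟨by linarith, by linarith⟩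
        linarith
      · have hXj : Xp n (i+1) ρ ≤ Xp n j ρ := hmono (i+1) j hji
        have habs : |x - (2*(j:ℝ) - 1) * ρ / (2*(n:ℝ))| = Xp n j ρ - x := by
          show |x - Xp n j ρ| = _
          rw [abs_sub_comm]; exact abs_of_nonneg (by linarith)
        rw [habs]
        have h4 : |x - β| < Xp n j ρ - x + (|y - 1/2| - |y - b2|) :=
          abs_sub_lt_iff.mpr ⟨by linarith, by linarith⟩
        linarith
  rw [hset]
  have hgcont : Continuous fun y : ℝ => |y - 1/2| - |y - b2| :=
    (continuous_abs.comp (continuous_id.sub continuous_const)).sub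
      (continuous_abs.comp (continuous_id.sub continuous_const))
  have hAcont : Continuous fun y : ℝ => (β + Xp n i ρ - (|y - 1/2| - |y - b2|))/2 := by
    fun_prop
  have hBcont : Continuous fun y : ℝ => (β + Xp n (i+1) ρ + (|y - 1/2| - |y - b2|))/2 := by
    fun_prop
  set S : Set (ℝ × ℝ) := {q : ℝ × ℝ | (0 ≤ q.2 ∧ q.2 ≤ 1) ∧
      (β + Xp n i ρ - (|q.2 - 1/2| - |q.2 - b2|))/2 < q.1 ∧
      q.1 < (β + Xp n (i+1) ρ + (|q.2 - 1/2| - |q.2 - b2|))/2} with hS_def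
  have hmeas : MeasurableSet S := by
    rw [hS_def]
    simp only [Set.setOf_and]
    refine (MeasurableSet.inter ?_ ?_).inter (MeasurableSet.inter ?_ ?_)
    · exact measurableSet_le measurable_const measurable_snd
    · exact measurableSet_le measurable_snd measurable_const
    · exact measurableSet_lt (hAcont.measurable.comp measurable_snd) measurable_fst
    · exact measurableSet_lt measurable_fst (hBcont.measurable.comp measurable_snd)
  rw [Measure.volume_eq_prod, Measure.prod_apply_symm hmeas]
  have hsec : ∀ y : ℝ, volume ((fun x => (x, y)) ⁻¹' S)
      = Set.indicator (Set.Icc (0:ℝ) 1)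
          (fun y => ENNReal.ofReal (ρ / (2*(n:ℝ)) + (|y - 1/2| - |y - b2|))) y := by
    intro y
    have hlen : (β + Xp n (i+1) ρ + (|y - 1/2| - |y - b2|))/2
        - (β + Xp n i ρ - (|y - 1/2| - |y - b2|))/2
        = ρ / (2*(n:ℝ)) + (|y - 1/2| - |y - b2|) := by
      unfold Xp
      push_cast
      field_simp
      ring
    by_cases h : 0 ≤ y ∧ y ≤ 1
    · have hpre : ((fun x => (x, y)) ⁻¹' S)
          = Set.Ioo ((β + Xp n i ρ - (|y - 1/2| - |y - b2|))/2)
                    ((β + Xp n (i+1) ρ + (|y - 1/2| - |y - b2|))/2) := by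
        ext x
        simp only [hS_def, Set.mem_preimage, Set.mem_setOf_eq, Set.mem_Ioo]
        tauto
      rw [hpre, Real.volume_Ioo, hlen, Set.indicator_of_mem (Set.mem_Icc.mpr h)]
    · have hpre : ((fun x => (x, y)) ⁻¹' S) = ∅ := by
        ext x
        simp only [hS_def, Set.mem_preimage, Set.mem_setOf_eq, Set.mem_empty_iff_false,
          iff_false]
        tauto
      rw [hpre, measure_empty, Set.indicator_of_notMem (by simpa [Set.mem_Icc] using h)]
  rw [lintegral_congr hsec, lintegral_indicator measurableSet_Icc]
  have hfc : Continuous fun y : ℝ => ρ / (2*(n:ℝ)) + (|y - 1/2| - |y - b2|) := by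
    fun_prop
  have hint : IntegrableOn (fun y : ℝ => ρ / (2*(n:ℝ)) + (|y - 1/2| - |y - b2|))
      (Set.Icc (0:ℝ) 1) := hfc.integrableOn_Icc
  have hnn : 0 ≤ᵐ[volume.restrict (Set.Icc (0:ℝ) 1)]
      fun y : ℝ => ρ / (2*(n:ℝ)) + (|y - 1/2| - |y - b2|) := by
    apply Filter.Eventually.of_forall
    intro y
    have := hgl y
    simp only [Pi.zero_apply]
    linarith
  rw [← ofReal_integral_eq_lintegral_ofReal hint hnn]
  congr 1
  rw [MeasureTheory.integral_Icc_eq_integral_Ioc,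
    ← intervalIntegral.integral_of_le zero_le_one]
  have habs1 : IntervalIntegrable (fun y : ℝ => |y - 1/2|) volume 0 1 :=
    (continuous_abs.comp (continuous_id.sub continuous_const)).intervalIntegrable 0 1
  have habs2 : IntervalIntegrable (fun y : ℝ => |y - b2|) volume 0 1 :=
    (continuous_abs.comp (continuous_id.sub continuous_const)).intervalIntegrable 0 1
  rw [show (fun y : ℝ => ρ / (2*(n:ℝ)) + (|y - 1/2| - |y - b2|))
      = fun y : ℝ => (fun _ : ℝ => ρ / (2*(n:ℝ))) y + ((fun y => |y - 1/2|) y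
        - (fun y => |y - b2|) y) from rfl]
  rw [intervalIntegral.integral_add (continuous_const.intervalIntegrable _ _)
    (habs1.sub habs2), intervalIntegral.integral_sub habs1 habs2,
    intervalIntegral.integral_const, integral_abs_sub (1/2) (by norm_num) (by norm_num),
    integral_abs_sub b2 hb20 hb21]
  have ht' : (b2 - 1/2)^2 = t^2 := by rw [← htb, sq_abs]
  have hexp : (b2 - 1/2)^2 = b2^2 - b2 + 1/4 := by ring
  simp only [smul_eq_mul]
  nlinarith [ht', hexp]

theorem black_cell_area_against_1xn_grid (n : ℕ) (hn : 1 ≤ n) (ρ : ℝ) (hρ : (n : ℝ) ≤ ρ) :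
    (∀ b : ℝ × ℝ, b.2 = 1/2 →
      (∃ i : ℕ, 1 ≤ i ∧ i ≤ n - 1 ∧
        (2*(i:ℝ) - 1) * ρ / (2*(n:ℝ)) < b.1 ∧ b.1 < (2*(i:ℝ) + 1) * ρ / (2*(n:ℝ))) →
      volume {q : ℝ × ℝ | q ∈ Set.Icc ((0, 0) : ℝ × ℝ) (ρ, 1) ∧
          ∀ w ∈ grid n ρ, dM q b < dM q w}
        = ENNReal.ofReal (ρ / (2*(n:ℝ)))) ∧
    (∀ b : ℝ × ℝ, ∀ t : ℝ, 0 < t → |b.2 - 1/2| = t →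
      b ∈ Set.Icc ((0, 0) : ℝ × ℝ) (ρ, 1) →
      (∃ i : ℕ, 1 ≤ i ∧ i ≤ n - 1 ∧
        (2*(i:ℝ) - 1) * ρ / (2*(n:ℝ)) + t < b.1 ∧ b.1 < (2*(i:ℝ) + 1) * ρ / (2*(n:ℝ)) - t) →
      volume {q : ℝ × ℝ | q ∈ Set.Icc ((0, 0) : ℝ × ℝ) (ρ, 1) ∧
          ∀ w ∈ grid n ρ, dM q b < dM q w}
        = ENNReal.ofReal (ρ / (2*(n:ℝ)) - t^2)) := by
  constructor
  · rintro b hb ⟨i, hi1, hin, hl, hr⟩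
    have hb' : b = (b.1, (1:ℝ)/2) := by rw [← hb]
    have hX1 : Xp n (i+1) ρ = (2*(i:ℝ) + 1) * ρ / (2*(n:ℝ)) := by
      unfold Xp; push_cast; ring
    have h := cell_volume n i ρ b.1 (1/2) 0 hn hρ hi1 (by omega) le_rfl
      (by norm_num) (by norm_num) (by norm_num)
      (by unfold Xp; linarith) (by rw [hX1]; linarith)
    rw [hb', h]; norm_num
  · rintro b t ht htb hbmem ⟨i, hi1, hin, hl, hr⟩
    have hX1 : Xp n (i+1) ρ = (2*(i:ℝ) + 1) * ρ / (2*(n:ℝ)) := by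
      unfold Xp; push_cast; ring
    rw [Set.mem_Icc] at hbmem
    have hb20 : (0:ℝ) ≤ b.2 := hbmem.1.2
    have hb21 : b.2 ≤ 1 := hbmem.2.2
    have h := cell_volume n i ρ b.1 b.2 t hn hρ hi1 (by omega) ht.le htb hb20 hb21
      (by unfold Xp; linarith) (by rw [hX1]; linarith)
    rw [show b = (b.1, b.2) from rfl] at *
    exact h
end

section
/- Let P be a finite point set in a rectangle R and p ∈ P with Voronoi cell V(p). Then V(p) is contained in the axis-aligned rectangle spanned by the endpoints of its four arms; i.e., if the top, bottom, left, right arms of p have lengths t, b, l, r respectively (the maximal lengths such that the corresponding segments from p lie in the closure of V(p)), then V(p) ⊆ [p_x - l, p_x + r] × [p_y - b, p_y + t]. -/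
/-- The length of the arm of the cell `C` at `p` in direction `v`: the supremum of `s ≥ 0`
such that the whole segment from `p` to `p + s • v` lies in the closure of `C`. -/
noncomputable def armLen (C : Set (ℝ × ℝ)) (p v : ℝ × ℝ) : ℝ :=
  sSup {s : ℝ | 0 ≤ s ∧ ∀ u : ℝ, 0 ≤ u → u ≤ s → p + u • v ∈ closure C}

lemma geodesic_mem_cell {R : Set (ℝ × ℝ)} {P : Finset (ℝ × ℝ)} {p q m : ℝ × ℝ}
    (hq : q ∈ cell R P p) (hmR : m ∈ R) (hgeo : dM q m + dM m p = dM q p) :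
    m ∈ cell R P p := by
  refine ⟨hmR, fun r hr hrp => ?_⟩
  have h1 := hq.2 r hr hrp
  have t1 := abs_sub_le q.1 m.1 r.1
  have t2 := abs_sub_le q.2 m.2 r.2
  simp only [dM] at *
  linarith

lemma p_mem_cell {R : Set (ℝ × ℝ)} {P : Finset (ℝ × ℝ)} {p : ℝ × ℝ}
    (hpR : p ∈ R) : p ∈ cell R P p := by
  refine ⟨hpR, fun r hr hrp => ?_⟩
  simp only [dM, sub_self, abs_zero, add_zero]
  rcases eq_or_ne r.1 p.1 with h1 | h1
  · have h2 : r.2 ≠ p.2 := fun h2 => hrp (Prod.ext h1 h2)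
    have : 0 < |p.2 - r.2| := abs_pos.mpr (sub_ne_zero.mpr (Ne.symm h2))
    have : 0 ≤ |p.1 - r.1| := abs_nonneg _
    linarith
  · have : 0 < |p.1 - r.1| := abs_pos.mpr (sub_ne_zero.mpr (Ne.symm h1))
    have : 0 ≤ |p.2 - r.2| := abs_nonneg _
    linarith

lemma closure_cell_subset (w h : ℝ) (P : Finset (ℝ × ℝ)) (p : ℝ × ℝ) :
    closure (cell (Set.Icc ((0, 0) : ℝ × ℝ) (w, h)) P p) ⊆ Set.Icc ((0, 0) : ℝ × ℝ) (w, h) := by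
  have : cell (Set.Icc ((0, 0) : ℝ × ℝ) (w, h)) P p ⊆ Set.Icc ((0, 0) : ℝ × ℝ) (w, h) :=
    fun x hx => hx.1
  exact (closure_minimal this isClosed_Icc)

lemma bdd_arm (w h : ℝ) (P : Finset (ℝ × ℝ)) (p v : ℝ × ℝ) (B : ℝ)
    (hB : ∀ s : ℝ, p + s • v ∈ Set.Icc ((0, 0) : ℝ × ℝ) (w, h) → s ≤ B) :
    BddAbove {s : ℝ | 0 ≤ s ∧ ∀ u : ℝ, 0 ≤ u → u ≤ s →
      p + u • v ∈ closure (cell (Set.Icc ((0, 0) : ℝ × ℝ) (w, h)) P p)} :=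
  ⟨B, fun s hs => hB s (closure_cell_subset w h P p (hs.2 s hs.1 le_rfl))⟩


theorem cell_in_rectangle_spanned_by_arms (w h : ℝ) (hw : 0 < w) (hh : 0 < h)
    (P : Finset (ℝ × ℝ)) (hPR : ↑P ⊆ Set.Icc ((0, 0) : ℝ × ℝ) (w, h))
    (p : ℝ × ℝ) (hp : p ∈ P) (q : ℝ × ℝ)
    (hq : q ∈ cell (Set.Icc ((0, 0) : ℝ × ℝ) (w, h)) P p) :
    p.1 - armLen (cell (Set.Icc ((0, 0) : ℝ × ℝ) (w, h)) P p) p (-1, 0) ≤ q.1 ∧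
    q.1 ≤ p.1 + armLen (cell (Set.Icc ((0, 0) : ℝ × ℝ) (w, h)) P p) p (1, 0) ∧
    p.2 - armLen (cell (Set.Icc ((0, 0) : ℝ × ℝ) (w, h)) P p) p (0, -1) ≤ q.2 ∧
    q.2 ≤ p.2 + armLen (cell (Set.Icc ((0, 0) : ℝ × ℝ) (w, h)) P p) p (0, 1) := by
  set R : Set (ℝ × ℝ) := Set.Icc ((0, 0) : ℝ × ℝ) (w, h) with hR
  set C : Set (ℝ × ℝ) := cell R P p with hC
  have pR := hPR hp
  have pR' := pR
  simp only [hR, Set.mem_Icc, Prod.le_def] at pR'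
  obtain ⟨⟨hp1, hp2⟩, hp3, hp4⟩ := pR'
  have qR' := hq.1
  simp only [hR, Set.mem_Icc, Prod.le_def] at qR'
  obtain ⟨⟨hq1, hq2⟩, hq3, hq4⟩ := qR'
  have hpc : p ∈ C := p_mem_cell pR
  have hzero : ∀ v : ℝ × ℝ,
      (0 : ℝ) ∈ {s : ℝ | 0 ≤ s ∧ ∀ u : ℝ, 0 ≤ u → u ≤ s → p + u • v ∈ closure C} := by
    intro v
    refine ⟨le_rfl, fun u hu hus => ?_⟩
    have : u = 0 := le_antisymm hus hu
    subst this
    simpa using subset_closure hpc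
  have hbL : BddAbove {s : ℝ | 0 ≤ s ∧ ∀ u : ℝ, 0 ≤ u → u ≤ s → p + u • ((-1:ℝ),(0:ℝ)) ∈ closure C} := by
    refine bdd_arm w h P p _ p.1 (fun s hs => ?_)
    have e : p + s • ((-1:ℝ),(0:ℝ)) = (p.1 - s, p.2) := by simp [Prod.ext_iff]; ring
    rw [e, Set.mem_Icc, Prod.le_def] at hs
    simp at hs; linarith [hs.1.1]
  have hbR : BddAbove {s : ℝ | 0 ≤ s ∧ ∀ u : ℝ, 0 ≤ u → u ≤ s → p + u • ((1:ℝ),(0:ℝ)) ∈ closure C} := by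
    refine bdd_arm w h P p _ w (fun s hs => ?_)
    have e : p + s • ((1:ℝ),(0:ℝ)) = (p.1 + s, p.2) := by simp [Prod.ext_iff]
    rw [e, Set.mem_Icc, Prod.le_def] at hs
    simp at hs; linarith [hs.2.1]
  have hbB : BddAbove {s : ℝ | 0 ≤ s ∧ ∀ u : ℝ, 0 ≤ u → u ≤ s → p + u • ((0:ℝ),(-1:ℝ)) ∈ closure C} := by
    refine bdd_arm w h P p _ p.2 (fun s hs => ?_)
    have e : p + s • ((0:ℝ),(-1:ℝ)) = (p.1, p.2 - s) := by simp [Prod.ext_iff]; ring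
    rw [e, Set.mem_Icc, Prod.le_def] at hs
    simp at hs; linarith [hs.1.2]
  have hbT : BddAbove {s : ℝ | 0 ≤ s ∧ ∀ u : ℝ, 0 ≤ u → u ≤ s → p + u • ((0:ℝ),(1:ℝ)) ∈ closure C} := by
    refine bdd_arm w h P p _ h (fun s hs => ?_)
    have e : p + s • ((0:ℝ),(1:ℝ)) = (p.1, p.2 + s) := by simp [Prod.ext_iff]
    rw [e, Set.mem_Icc, Prod.le_def] at hs
    simp at hs; linarith [hs.2.2]
  refine ⟨?_, ?_, ?_, ?_⟩
  · rcases le_or_gt p.1 q.1 with hle | hlt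
    · have h0 := le_csSup hbL (hzero ((-1:ℝ),(0:ℝ)))
      simp only [armLen]; linarith
    · have hmem : (p.1 - q.1) ∈ {s : ℝ | 0 ≤ s ∧ ∀ u : ℝ, 0 ≤ u → u ≤ s →
          p + u • ((-1:ℝ),(0:ℝ)) ∈ closure C} := by
        refine ⟨by linarith, fun u hu hus => ?_⟩
        have hm : p + u • ((-1:ℝ),(0:ℝ)) = (p.1 - u, p.2) := by simp [Prod.ext_iff]; ring
        rw [hm]
        refine subset_closure (geodesic_mem_cell hq ?_ ?_)
        · simp only [hR, Set.mem_Icc, Prod.le_def]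
          norm_num
          refine ⟨⟨by linarith, by linarith⟩, by linarith, by linarith⟩
        · simp only [dM]
          norm_num
          rw [abs_of_nonpos (show q.1 - (p.1 - u) ≤ 0 by linarith),
              abs_of_nonneg (show (0:ℝ) ≤ u by linarith),
              abs_of_nonpos (show q.1 - p.1 ≤ 0 by linarith)]
          ring
      have hle2 := le_csSup hbL hmem
      simp only [armLen]; linarith
  · rcases le_or_gt q.1 p.1 with hle | hlt
    · have h0 := le_csSup hbR (hzero ((1:ℝ),(0:ℝ)))
      simp only [armLen]; linarith
    · have hmem : (q.1 - p.1) ∈ {s : ℝ | 0 ≤ s ∧ ∀ u : ℝ, 0 ≤ u → u ≤ s →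
          p + u • ((1:ℝ),(0:ℝ)) ∈ closure C} := by
        refine ⟨by linarith, fun u hu hus => ?_⟩
        have hm : p + u • ((1:ℝ),(0:ℝ)) = (p.1 + u, p.2) := by simp [Prod.ext_iff]
        rw [hm]
        refine subset_closure (geodesic_mem_cell hq ?_ ?_)
        · simp only [hR, Set.mem_Icc, Prod.le_def]
          norm_num
          refine ⟨⟨by linarith, by linarith⟩, by linarith, by linarith⟩
        · simp only [dM]
          norm_num
          rw [abs_of_nonneg (show (0:ℝ) ≤ q.1 - (p.1 + u) by linarith),
              abs_of_nonneg (show (0:ℝ) ≤ u by linarith),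
              abs_of_nonneg (show (0:ℝ) ≤ q.1 - p.1 by linarith)]
          ring
      have hle2 := le_csSup hbR hmem
      simp only [armLen]; linarith
  · rcases le_or_gt p.2 q.2 with hle | hlt
    · have h0 := le_csSup hbB (hzero ((0:ℝ),(-1:ℝ)))
      simp only [armLen]; linarith
    · have hmem : (p.2 - q.2) ∈ {s : ℝ | 0 ≤ s ∧ ∀ u : ℝ, 0 ≤ u → u ≤ s →
          p + u • ((0:ℝ),(-1:ℝ)) ∈ closure C} := by
        refine ⟨by linarith, fun u hu hus => ?_⟩
        have hm : p + u • ((0:ℝ),(-1:ℝ)) = (p.1, p.2 - u) := by simp [Prod.ext_iff]; ring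
        rw [hm]
        refine subset_closure (geodesic_mem_cell hq ?_ ?_)
        · simp only [hR, Set.mem_Icc, Prod.le_def]
          norm_num
          refine ⟨⟨by linarith, by linarith⟩, by linarith, by linarith⟩
        · simp only [dM]
          norm_num
          rw [abs_of_nonpos (show q.2 - (p.2 - u) ≤ 0 by linarith),
              abs_of_nonneg (show (0:ℝ) ≤ u by linarith),
              abs_of_nonpos (show q.2 - p.2 ≤ 0 by linarith)]
          ring
      have hle2 := le_csSup hbB hmem
      simp only [armLen]; linarith
  · rcases le_or_gt q.2 p.2 with hle | hlt
    · have h0 := le_csSup hbT (hzero ((0:ℝ),(1:ℝ)))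
      simp only [armLen]; linarith
    · have hmem : (q.2 - p.2) ∈ {s : ℝ | 0 ≤ s ∧ ∀ u : ℝ, 0 ≤ u → u ≤ s →
          p + u • ((0:ℝ),(1:ℝ)) ∈ closure C} := by
        refine ⟨by linarith, fun u hu hus => ?_⟩
        have hm : p + u • ((0:ℝ),(1:ℝ)) = (p.1, p.2 + u) := by simp [Prod.ext_iff]
        rw [hm]
        refine subset_closure (geodesic_mem_cell hq ?_ ?_)
        · simp only [hR, Set.mem_Icc, Prod.le_def]
          norm_num
          refine ⟨⟨by linarith, by linarith⟩, by linarith, by linarith⟩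
        · simp only [dM]
          norm_num
          rw [abs_of_nonneg (show (0:ℝ) ≤ q.2 - (p.2 + u) by linarith),
              abs_of_nonneg (show (0:ℝ) ≤ u by linarith),
              abs_of_nonneg (show (0:ℝ) ≤ q.2 - p.2 by linarith)]
          ring
      have hle2 := le_csSup hbT hmem
      simp only [armLen]; linarith
end
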